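/- Let Π = ⟨a, b ∣ [a³, b] = 1, ab² = ba²⟩. The quotient of Π by the normal closure of the images of a³ and b³ is a finite group. -/

import Mathlib

open scoped commutatorElement

/-- Relators of `Π = ⟨a, b ∣ [a³, b] = 1, ab² = ba²⟩`, with `a = 0`, `b = 1`. -/
def relsC3C2 : Set (FreeGroup (Fin 2)) :=
  {⁅(FreeGroup.of 0 : FreeGroup (Fin 2)) ^ 3, FreeGroup.of 1⁆,
   FreeGroup.of 0 * FreeGroup.of 1 ^ 2 * (FreeGroup.of 1 * FreeGroup.of 0 ^ 2)⁻¹}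

/-- A twelve-element subset of a group, the candidate underlying set of `A₄`. -/
def A4T {G : Type*} [Group G] (a b : G) : Set G :=
  {1, a, b, a*a, a*b, b*a, b*b, a*(a*b), a*(b*a), b*(a*a), a*(a*(b*a)), a*(b*(a*a))}

set_option maxHeartbeats 1000000 in
theorem A4finite {G : Type*} [Group G] (a b : G)
    (ha : a*a*a = 1) (hb : b*b*b = 1) (hc : a*b*b = b*a*a)
    (hgen : ∀ g : G, ∃ w : FreeGroup (Fin 2), FreeGroup.lift ![a, b] w = g) :
    Finite G := by
  -- derived relations (a confluent rewriting system for A₄)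
  have r6 : b*b*a = a*a*b := by
    have h1 : a*(b*b*a) = a*(a*a*b) := by
      calc a*(b*b*a) = (a*b*b)*a := by group
        _ = (b*a*a)*a := by rw [hc]
        _ = b := by rw [show (b*a*a)*a = b*(a*a*a) from by group, ha, mul_one]
        _ = a*(a*a*b) := by rw [show a*(a*a*b) = (a*a*a)*b from by group, ha, one_mul]
    exact mul_left_cancel h1
  have r5 : b*a*a*b = a := by
    calc b*a*a*b = b*(a*a*b) := by group
      _ = b*(b*b*a) := by rw [r6]
      _ = (b*b*b)*a := by group
      _ = a := by rw [hb, one_mul]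
  have r4 : a*a*b*a*a = b*b := by
    calc a*a*b*a*a = (a*a*b)*(a*a) := by group
      _ = (b*b*a)*(a*a) := by rw [← r6]
      _ = b*b*(a*a*a) := by group
      _ = b*b := by rw [ha, mul_one]
  have h2 : a*b*b*a*a = b*a := by
    rw [hc, show b*a*a*a*a = b*(a*a*a)*a from by group, ha, mul_one]
  have r7 : b*a*b = a*b*a := by
    calc b*a*b = (a*b*b*a*a)*b := by rw [h2]
      _ = (a*b)*(b*a*a*b) := by group
      _ = (a*b)*a := by rw [r5]
      _ = a*b*a := rfl
  -- right-associated closed forms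
  have ca : a*(a*a) = 1 := by rw [← mul_assoc, ha]
  have cb : b*(b*b) = 1 := by rw [← mul_assoc, hb]
  have cc : a*(b*b) = b*(a*a) := by
    rw [show a*(b*b) = a*b*b from by group, hc]; group
  have c6 : b*(b*a) = a*(a*b) := by
    rw [show b*(b*a) = b*b*a from by group, r6]; group
  have c5 : b*(a*(a*b)) = a := by
    rw [show b*(a*(a*b)) = b*a*a*b from by group, r5]
  have c4 : a*(a*(b*(a*a))) = b*b := by
    rw [show a*(a*(b*(a*a))) = a*a*b*a*a from by group, r4]
  have c7 : b*(a*b) = a*(b*a) := by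
    rw [show b*(a*b) = b*a*b from by group, r7]; group
  -- rules with a trailing variable
  have wa : ∀ x : G, a*(a*(a*x)) = x := fun x => by
    rw [show a*(a*(a*x)) = (a*a*a)*x from by group, ha, one_mul]
  have wb : ∀ x : G, b*(b*(b*x)) = x := fun x => by
    rw [show b*(b*(b*x)) = (b*b*b)*x from by group, hb, one_mul]
  have wc : ∀ x : G, a*(b*(b*x)) = b*(a*(a*x)) := fun x => by
    rw [show a*(b*(b*x)) = (a*b*b)*x from by group, hc]; group
  have w6 : ∀ x : G, b*(b*(a*x)) = a*(a*(b*x)) := fun x => by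
    rw [show b*(b*(a*x)) = (b*b*a)*x from by group, r6]; group
  have w5 : ∀ x : G, b*(a*(a*(b*x))) = a*x := fun x => by
    rw [show b*(a*(a*(b*x))) = (b*a*a*b)*x from by group, r5]
  have w4 : ∀ x : G, a*(a*(b*(a*(a*x)))) = b*(b*x) := fun x => by
    rw [show a*(a*(b*(a*(a*x)))) = (a*a*b*a*a)*x from by group, r4]; group
  have w7 : ∀ x : G, b*(a*(b*x)) = a*(b*(a*x)) := fun x => by
    rw [show b*(a*(b*x)) = (b*a*b)*x from by group, r7]; group
  -- the twelve-element set is closed under right multiplication by the generators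
  have hstepa : ∀ t ∈ A4T a b, t * a ∈ A4T a b := by
    intro t ht
    simp only [A4T, Set.mem_insert_iff, Set.mem_singleton_iff] at ht
    rcases ht with rfl|rfl|rfl|rfl|rfl|rfl|rfl|rfl|rfl|rfl|rfl|rfl <;>
      simp [A4T, Set.mem_insert_iff, Set.mem_singleton_iff, mul_assoc,
        ca, cb, cc, c6, c5, c4, c7, wa, wb, wc, w6, w5, w4, w7]
  have hstepb : ∀ t ∈ A4T a b, t * b ∈ A4T a b := by
    intro t ht
    simp only [A4T, Set.mem_insert_iff, Set.mem_singleton_iff] at ht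
    rcases ht with rfl|rfl|rfl|rfl|rfl|rfl|rfl|rfl|rfl|rfl|rfl|rfl <;>
      simp [A4T, Set.mem_insert_iff, Set.mem_singleton_iff, mul_assoc,
        ca, cb, cc, c6, c5, c4, c7, wa, wb, wc, w6, w5, w4, w7]
  have hainv : a⁻¹ = a*a := inv_eq_of_mul_eq_one_right ca
  have hbinv : b⁻¹ = b*b := inv_eq_of_mul_eq_one_right cb
  have hpure : ∀ x : Fin 2, (FreeGroup.lift ![a, b]) (FreeGroup.of x) = ![a, b] x :=
    fun _ => FreeGroup.lift_apply_of
  -- every element obtained from a word lies in the set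
  have main : ∀ (w : FreeGroup (Fin 2)), ∀ t ∈ A4T a b,
      t * (FreeGroup.lift ![a, b] w) ∈ A4T a b := by
    intro w
    induction w with
    | C1 => simpa using fun t ht => ht
    | of x =>
      intro t ht
      rw [hpure]
      fin_cases x
      · simpa using hstepa t ht
      · simpa using hstepb t ht
    | inv_of x _ =>
      intro t ht
      rw [map_inv, hpure]
      fin_cases x
      · simp only [Fin.zero_eta, Matrix.cons_val_zero]
        rw [hainv, ← mul_assoc]
        exact hstepa _ (hstepa _ ht)
      · simp only [Fin.mk_one, Matrix.cons_val_one, Matrix.head_cons, Matrix.cons_val_zero]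
        rw [hbinv, ← mul_assoc]
        exact hstepb _ (hstepb _ ht)
    | mul x y hx hy =>
      intro t ht
      rw [map_mul, ← mul_assoc]
      exact hy _ (hx _ ht)
  have hall : ∀ g : G, g ∈ A4T a b := by
    intro g
    obtain ⟨w, rfl⟩ := hgen g
    simpa using main w 1 (by simp [A4T])
  have hfin : (A4T a b).Finite := by
    unfold A4T
    repeat first | exact Set.finite_singleton _ | apply Set.Finite.insert
  have huniv : (Set.univ : Set G).Finite := hfin.subset fun g _ => hall g
  exact Set.finite_univ_iff.mp huniv

/-- The quotient of `Π = ⟨a, b ∣ [a³, b] = 1, ab² = ba²⟩` by the normal closure of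
`{a³, b³}` is a finite group. -/
theorem stmt_17 :
    Finite
      (PresentedGroup relsC3C2 ⧸
        Subgroup.normalClosure
          {(PresentedGroup.of 0 : PresentedGroup relsC3C2) ^ 3,
           (PresentedGroup.of 1 : PresentedGroup relsC3C2) ^ 3}) := by
  set N := Subgroup.normalClosure
      {(PresentedGroup.of 0 : PresentedGroup relsC3C2) ^ 3,
       (PresentedGroup.of 1 : PresentedGroup relsC3C2) ^ 3} with hN
  let ψ : FreeGroup (Fin 2) →* PresentedGroup relsC3C2 ⧸ N :=
    (QuotientGroup.mk' N).comp (PresentedGroup.mk relsC3C2)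
  set a : PresentedGroup relsC3C2 ⧸ N := ψ (FreeGroup.of 0) with ha_def
  set b : PresentedGroup relsC3C2 ⧸ N := ψ (FreeGroup.of 1) with hb_def
  have key : ∀ r ∈ relsC3C2, ψ r = 1 := by
    intro r hr
    show (QuotientGroup.mk' N) (PresentedGroup.mk relsC3C2 r) = 1
    rw [show PresentedGroup.mk relsC3C2 r = 1 from
      (QuotientGroup.eq_one_iff r).mpr (Subgroup.subset_normalClosure hr), map_one]
  have h1 : ψ (FreeGroup.of 0 * FreeGroup.of 1 ^ 2 * (FreeGroup.of 1 * FreeGroup.of 0 ^ 2)⁻¹)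
      = 1 := key _ (Set.mem_insert_iff.mpr (Or.inr rfl))
  simp only [map_mul, map_inv, map_pow, mul_inv_eq_one] at h1
  -- h1 : ψ (of 0) * ψ (of 1) ^ 2 = ψ (of 1) * ψ (of 0) ^ 2
  have hc : a * b * b = b * a * a := by
    rw [ha_def, hb_def]
    calc ψ (FreeGroup.of 0) * ψ (FreeGroup.of 1) * ψ (FreeGroup.of 1)
        = ψ (FreeGroup.of 0) * ψ (FreeGroup.of 1) ^ 2 := by rw [pow_two, mul_assoc]
      _ = ψ (FreeGroup.of 1) * ψ (FreeGroup.of 0) ^ 2 := h1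
      _ = ψ (FreeGroup.of 1) * ψ (FreeGroup.of 0) * ψ (FreeGroup.of 0) := by
          rw [pow_two, mul_assoc]
  have hA : a * a * a = 1 := by
    have h0 : (QuotientGroup.mk ((PresentedGroup.of 0 : PresentedGroup relsC3C2) ^ 3)
        : PresentedGroup relsC3C2 ⧸ N) = 1 :=
      (QuotientGroup.eq_one_iff _).mpr
        (Subgroup.subset_normalClosure (Set.mem_insert_iff.mpr (Or.inl rfl)))
    rw [ha_def, ← pow_three']
    exact h0
  have hB : b * b * b = 1 := by
    have h0 : (QuotientGroup.mk ((PresentedGroup.of 1 : PresentedGroup relsC3C2) ^ 3)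
        : PresentedGroup relsC3C2 ⧸ N) = 1 :=
      (QuotientGroup.eq_one_iff _).mpr
        (Subgroup.subset_normalClosure (Set.mem_insert_iff.mpr (Or.inr rfl)))
    rw [hb_def, ← pow_three']
    exact h0
  refine A4finite a b hA hB hc ?_
  intro g
  obtain ⟨p, rfl⟩ := QuotientGroup.mk'_surjective N g
  obtain ⟨w, rfl⟩ := PresentedGroup.mk_surjective relsC3C2 p
  refine ⟨w, ?_⟩
  have hlift : FreeGroup.lift ![a, b] = ψ := by
    apply FreeGroup.ext_hom
    intro x
    fin_cases x <;> simp [ha_def, hb_def]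
  rw [hlift]
  rfl
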